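/- Every square complex matrix C ∈ M_n(ℂ) with trace zero can be written as a commutator: there exist A, B ∈ M_n(ℂ) with C = AB − BA. In particular, every nilpotent matrix is a commutator of matrices. -/

import Mathlib

open Matrix


lemma hollow_comm {n : ℕ} (M : Matrix (Fin n) (Fin n) ℂ) (h : ∀ i, M i i = 0) :
    ∃ A B : Matrix (Fin n) (Fin n) ℂ, M = A * B - B * A := by
  refine ⟨Matrix.diagonal (fun i => (i : ℂ)),
    Matrix.of (fun i j => if i = j then 0 else M i j / ((i : ℂ) - (j : ℂ))), ?_⟩
  ext i j
  rw [Matrix.sub_apply, Matrix.diagonal_mul, Matrix.mul_diagonal]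
  by_cases hij : i = j
  · subst hij; simp [h i]
  · have hne : (i : ℂ) ≠ (j : ℂ) := by
      intro hh
      exact hij (Fin.ext (by exact_mod_cast hh))
    have hs : (i : ℂ) - (j : ℂ) ≠ 0 := sub_ne_zero.2 hne
    simp only [Matrix.of_apply, if_neg hij]
    field_simp


lemma scalar_zero {n : ℕ} (C : Matrix (Fin (n+1)) (Fin (n+1)) ℂ)
    (h : ∀ v : Fin (n+1) → ℂ, ∃ a : ℂ, C.mulVec v = a • v)
    (htr : Matrix.trace C = 0) : C = 0 := by
  have key : ∀ i j : Fin (n+1), i ≠ j → C i j = 0 := by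
    intro i j hij
    obtain ⟨a, ha⟩ := h (Pi.single j 1)
    have := congrFun ha i
    simpa [Matrix.mulVec_single, Pi.single_apply, hij] using this
  have diag : ∀ j k : Fin (n+1), C j j = C k k := by
    intro j k
    rcases eq_or_ne j k with rfl | hjk
    · rfl
    obtain ⟨a, ha⟩ := h (Pi.single j 1 + Pi.single k 1)
    have hj := congrFun ha j
    have hk := congrFun ha k
    simp [Matrix.mulVec_add, Matrix.mulVec_single, Pi.single_apply, hjk, hjk.symm,
      key j k hjk, key k j hjk.symm] at hj hk
    rw [hj, hk]
  have h0 : C 0 0 = 0 := by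
    have h2 : Matrix.trace C = ((n+1 : ℕ) : ℂ) * C 0 0 := by
      rw [Matrix.trace]
      have : ∀ i ∈ Finset.univ, Matrix.diag C i = C 0 0 := fun i _ => diag i 0
      rw [Finset.sum_congr rfl this, Finset.sum_const, Finset.card_univ, Fintype.card_fin,
        nsmul_eq_mul]
    rw [htr] at h2
    have h1 : ((n+1 : ℕ) : ℂ) ≠ 0 := Nat.cast_ne_zero.2 (Nat.succ_ne_zero n)
    exact (mul_eq_zero.1 h2.symm).resolve_left h1
  ext i j
  rcases eq_or_ne i j with rfl | hij
  · rw [diag i 0, h0]; rfl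
  · rw [key i j hij]; rfl



lemma hollow_sim : ∀ (n : ℕ) (C : Matrix (Fin n) (Fin n) ℂ), Matrix.trace C = 0 →
    ∃ P Pi : Matrix (Fin n) (Fin n) ℂ,
      Pi * P = 1 ∧ P * Pi = 1 ∧ ∀ i, (Pi * C * P) i i = 0 := by
  intro n
  induction n with
  | zero => exact fun C _ => ⟨1, 1, by simp, by simp, fun i => i.elim0⟩
  | succ n ih =>
    intro C htr
    by_cases hsc : ∀ v : Fin (n+1) → ℂ, ∃ a : ℂ, C.mulVec v = a • v
    · refine ⟨1, 1, by simp, by simp, ?_⟩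
      rw [scalar_zero C hsc htr]; simp
    push_neg at hsc
    obtain ⟨v, hv⟩ := hsc
    set w := C.mulVec v with hw
    have hv0 : v ≠ 0 := by
      rintro rfl
      exact hv 0 (by simp [hw, Matrix.mulVec_zero])
    have hvw : v ≠ w := fun h => hv 1 (by rw [one_smul, ← h])
    have li := linearIndepOn_id_pair hv0 (fun a ha => hv a ha.symm)
    set s := li.extend (Set.subset_univ _) with hsdef
    have hsub : {v, w} ⊆ s := li.subset_extend _
    have hv_s : v ∈ s := hsub (by simp)
    have hw_s : w ∈ s := hsub (by simp)
    let B : Module.Basis s ℂ (Fin (n+1) → ℂ) := Module.Basis.extend li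
    haveI : Fintype s := FiniteDimensional.fintypeBasisIndex B
    have hcard : Fintype.card s = n + 1 := by
      rw [← Module.finrank_eq_card_basis B]
      simp
    have h01 : (0 : Fin (n+1)) ≠ 1 := by
      have h2 : 2 ≤ Fintype.card s := by
        have : ({⟨v, hv_s⟩, ⟨w, hw_s⟩} : Finset s).card ≤ Fintype.card s :=
          Finset.card_le_univ _
        rwa [Finset.card_pair (by simpa using hvw)] at this
      rw [hcard] at h2
      intro h
      have := congrArg Fin.val h
      rw [Fin.val_zero, Fin.val_one', Nat.mod_eq_of_lt h2] at this
      exact one_ne_zero this.symm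
    let e0 : Fin (n+1) ≃ s := (Fintype.equivFinOfCardEq hcard).symm
    let e1 : Fin (n+1) ≃ s := (Equiv.swap (0 : Fin (n+1)) (e0.symm ⟨v, hv_s⟩)).trans e0
    have he10 : e1 0 = ⟨v, hv_s⟩ := by simp [e1]
    let j0 := e1.symm ⟨w, hw_s⟩
    have hj0 : j0 ≠ 0 := by
      intro h
      have : e1 j0 = e1 0 := by rw [h]
      rw [Equiv.apply_symm_apply, he10] at this
      exact hvw (by simpa using this.symm)
    let e : Fin (n+1) ≃ s := (Equiv.swap (1 : Fin (n+1)) j0).trans e1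
    have he0 : e 0 = ⟨v, hv_s⟩ := by
      simp only [e, Equiv.trans_apply]
      rw [Equiv.swap_apply_of_ne_of_ne h01 (Ne.symm hj0)]
      exact he10
    have he1 : e 1 = ⟨w, hw_s⟩ := by
      simp only [e, Equiv.trans_apply, Equiv.swap_apply_left, j0, Equiv.apply_symm_apply]
    let b : Module.Basis (Fin (n+1)) ℂ (Fin (n+1) → ℂ) := B.reindex e.symm
    have hb0 : b 0 = v := by
      simp only [b, Module.Basis.reindex_apply, Equiv.symm_symm, he0]
      exact Module.Basis.extend_apply_self li _
    have hb1 : b 1 = w := by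
      simp only [b, Module.Basis.reindex_apply, Equiv.symm_symm, he1]
      exact Module.Basis.extend_apply_self li _
    let std := Pi.basisFun ℂ (Fin (n+1))
    let P := std.toMatrix b
    let Pinv := b.toMatrix std
    have hPiP : Pinv * P = 1 := Module.Basis.toMatrix_mul_toMatrix_flip b std
    have hPPi : P * Pinv = 1 := Module.Basis.toMatrix_mul_toMatrix_flip std b
    have hPcol : ∀ j, P.mulVec (Pi.single j 1) = b j := by
      intro j; funext i
      rw [Matrix.mulVec_single]
      show P i j * 1 = b j i
      rw [mul_one]
      simp [P, Module.Basis.toMatrix_apply, std]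
    set M := Pinv * C * P with hMdef
    have hM00 : M 0 0 = 0 := by
      have hcol : M.mulVec (Pi.single (0 : Fin (n+1)) 1) = Pi.single (1 : Fin (n+1)) 1 := by
        have : M.mulVec (Pi.single (0 : Fin (n+1)) 1)
            = Pinv.mulVec (C.mulVec (P.mulVec (Pi.single 0 1))) := by
          rw [hMdef, ← Matrix.mulVec_mulVec, ← Matrix.mulVec_mulVec]
        rw [this, hPcol, hb0, ← hw, ← hb1, ← hPcol, Matrix.mulVec_mulVec, hPiP,
          Matrix.one_mulVec]
      have h2 := congrFun hcol 0
      simpa [Pi.single_apply, h01] using h2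
    have hMtr : Matrix.trace M = 0 := by
      rw [hMdef, Matrix.trace_mul_comm (Pinv * C) P, ← Matrix.mul_assoc, hPPi, Matrix.one_mul,
        htr]
    -- block step
    let eS : Fin 1 ⊕ Fin n ≃ Fin (n+1) := finSumFinEquiv.trans (finCongr (Nat.add_comm 1 n))
    have heS0 : eS (Sum.inl 0) = 0 := by
      apply Fin.ext
      simp [eS]
    set N := M.submatrix eS eS with hNdef
    set D := Matrix.of (fun i j : Fin n => N (Sum.inr i) (Sum.inr j)) with hDdef
    have hDtr : Matrix.trace D = 0 := by
      have hNtr : Matrix.trace N = Matrix.trace M := by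
        rw [Matrix.trace, Matrix.trace, ← Equiv.sum_comp eS (Matrix.diag M)]
        rfl
      have : Matrix.trace N = N (Sum.inl 0) (Sum.inl 0) + Matrix.trace D := by
        rw [Matrix.trace, Matrix.trace]
        rw [Fintype.sum_sum_type]
        simp [hDdef, Matrix.diag]
      rw [hNtr, hMtr] at this
      have hN00 : N (Sum.inl 0) (Sum.inl 0) = 0 := by rw [hNdef]; simp [heS0, hM00]
      rw [hN00, zero_add] at this
      exact this.symm
    obtain ⟨Q, Qi, hQ1, hQ2, hQh⟩ := ih D hDtr
    let S : Matrix (Fin 1 ⊕ Fin n) (Fin 1 ⊕ Fin n) ℂ := Matrix.fromBlocks 1 0 0 Q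
    let Si : Matrix (Fin 1 ⊕ Fin n) (Fin 1 ⊕ Fin n) ℂ := Matrix.fromBlocks 1 0 0 Qi
    have hSiS : Si * S = 1 := by
      simp [S, Si, Matrix.fromBlocks_multiply, hQ1, Matrix.fromBlocks_one]
    have hSSi : S * Si = 1 := by
      simp [S, Si, Matrix.fromBlocks_multiply, hQ2, Matrix.fromBlocks_one]
    have hhol : ∀ x, (Si * N * S) x x = 0 := by
      have hNblocks : N = Matrix.fromBlocks (N.toBlocks₁₁) (N.toBlocks₁₂) (N.toBlocks₂₁) D :=
        (Matrix.fromBlocks_toBlocks N).symm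
      intro x
      rw [hNblocks]
      simp only [S, Si, Matrix.fromBlocks_multiply]
      cases x with
      | inl i =>
        simp only [Matrix.fromBlocks_apply₁₁]
        have : (i : Fin 1) = 0 := Subsingleton.elim _ _
        subst this
        simp [Matrix.toBlocks₁₁, heS0, hM00, hNdef]
      | inr i =>
        simp only [Matrix.fromBlocks_apply₂₂]
        simpa using hQh i
    refine ⟨P * (S.submatrix eS.symm eS.symm), (Si.submatrix eS.symm eS.symm) * Pinv, ?_, ?_, ?_⟩
    · rw [Matrix.mul_assoc, ← Matrix.mul_assoc Pinv, hPiP, Matrix.one_mul,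
        Matrix.submatrix_mul_equiv, hSiS, Matrix.submatrix_one_equiv]
    · rw [Matrix.mul_assoc, ← Matrix.mul_assoc (S.submatrix eS.symm eS.symm),
        Matrix.submatrix_mul_equiv, hSSi, Matrix.submatrix_one_equiv, Matrix.one_mul, hPPi]
    · intro i
      have hform : (Si.submatrix eS.symm eS.symm) * Pinv * C * (P * (S.submatrix eS.symm eS.symm))
          = (Si * N * S).submatrix eS.symm eS.symm := by
        have hMN : M = N.submatrix eS.symm eS.symm := by
          rw [hNdef, Matrix.submatrix_submatrix]
          simp [Equiv.self_comp_symm]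
        calc (Si.submatrix eS.symm eS.symm) * Pinv * C * (P * (S.submatrix eS.symm eS.symm))
            = (Si.submatrix eS.symm eS.symm) * M * (S.submatrix eS.symm eS.symm) := by
              simp only [hMdef, Matrix.mul_assoc]
          _ = (Si * N * S).submatrix eS.symm eS.symm := by
              rw [hMN, Matrix.submatrix_mul_equiv, Matrix.submatrix_mul_equiv]
      rw [hform]
      exact hhol (eS.symm i)


theorem stmt_13 (n : ℕ) (C : Matrix (Fin n) (Fin n) ℂ) :
    (Matrix.trace C = 0 → ∃ A B : Matrix (Fin n) (Fin n) ℂ, C = A * B - B * A) ∧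
    (IsNilpotent C → ∃ A B : Matrix (Fin n) (Fin n) ℂ, C = A * B - B * A) := by
  have main : Matrix.trace C = 0 → ∃ A B : Matrix (Fin n) (Fin n) ℂ, C = A * B - B * A := by
    intro htr
    obtain ⟨P, Pinv, h1, h2, hh⟩ := hollow_sim n C htr
    obtain ⟨A, B, hAB⟩ := hollow_comm (Pinv * C * P) hh
    refine ⟨P * A * Pinv, P * B * Pinv, ?_⟩
    have hC : C = P * (Pinv * C * P) * Pinv := by
      rw [← Matrix.mul_assoc, ← Matrix.mul_assoc, h2, Matrix.one_mul, Matrix.mul_assoc, h2,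
        Matrix.mul_one]
    rw [hC, hAB]
    rw [Matrix.mul_sub, Matrix.sub_mul]
    congr 1
    · calc P * (A * B) * Pinv = P * A * (Pinv * P) * B * Pinv := by
            rw [h1]; simp only [Matrix.mul_assoc, Matrix.one_mul]
        _ = P * A * Pinv * (P * B * Pinv) := by simp only [Matrix.mul_assoc]
    · calc P * (B * A) * Pinv = P * B * (Pinv * P) * A * Pinv := by
            rw [h1]; simp only [Matrix.mul_assoc, Matrix.one_mul]
        _ = P * B * Pinv * (P * A * Pinv) := by simp only [Matrix.mul_assoc]
  refine ⟨main, fun hnil => main ?_⟩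
  exact (Matrix.isNilpotent_trace_of_isNilpotent hnil).eq_zero
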